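/- If z^+ ≥ ‖w‖e, then the projection of (−z,−w) onto M = {(y,v) : ⟨y,e⟩ ≥ ‖v‖, y ≥ 0} equals (z^−, 0). -/

import Mathlib

private lemma normsq_eq_sum {n : ℕ} (x : EuclideanSpace ℝ (Fin n)) :
    ‖x‖^2 = ∑ i, (x i)^2 := by
  rw [EuclideanSpace.norm_eq, Real.sq_sqrt (by positivity)]
  simp [Real.norm_eq_abs, sq_abs]

set_option maxHeartbeats 1000000 in
theorem proj_M_case1
    (p q : ℕ) (hp : 0 < p) (hq : 0 < q)
    (M : Set (EuclideanSpace ℝ (Fin p) × EuclideanSpace ℝ (Fin q)))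
    (hM : M = {yv | ‖yv.2‖ ≤ ∑ i : Fin p, yv.1 i ∧ ∀ i : Fin p, 0 ≤ yv.1 i})
    (z : EuclideanSpace ℝ (Fin p)) (w : EuclideanSpace ℝ (Fin q))
    (h : ∀ i : Fin p, ‖w‖ ≤ max (z i) 0) :
    (((WithLp.equiv 2 _).symm (fun i => max (-z i) 0), (0 : EuclideanSpace ℝ (Fin q))) ∈ M ∧
      (∀ a ∈ M, ‖(-z) - (WithLp.equiv 2 _).symm (fun i => max (-z i) 0)‖ ^ 2 + ‖(-w) - 0‖ ^ 2
          ≤ ‖(-z) - a.1‖ ^ 2 + ‖(-w) - a.2‖ ^ 2)) ∧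
      ∀ b ∈ M, (∀ a ∈ M, ‖(-z) - b.1‖ ^ 2 + ‖(-w) - b.2‖ ^ 2 ≤ ‖(-z) - a.1‖ ^ 2 + ‖(-w) - a.2‖ ^ 2) →
        b = ((WithLp.equiv 2 _).symm (fun i => max (-z i) 0), (0 : EuclideanSpace ℝ (Fin q))) := by
  subst hM
  set P : EuclideanSpace ℝ (Fin p) := (WithLp.equiv 2 (Fin p → ℝ)).symm (fun i => max (-z i) 0)
    with hP
  have hPapp : ∀ i, P i = max (-z i) 0 := fun i => rfl
  -- cost of projection point
  have hcostP : ‖(-z) - P‖ ^ 2 + ‖(-w) - (0:EuclideanSpace ℝ (Fin q))‖ ^ 2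
      = (∑ i, (max (z i) 0)^2) + ‖w‖^2 := by
    rw [sub_zero, norm_neg, normsq_eq_sum]
    congr 1
    refine Finset.sum_congr rfl (fun i _ => ?_)
    have hc : ((-z) - P) i = -z i - max (-z i) 0 := by simp [hPapp]
    rw [hc]
    rcases le_total (z i) 0 with hz | hz
    · rw [max_eq_left (by linarith : (0:ℝ) ≤ -z i), max_eq_right hz]; ring
    · rw [max_eq_right (by linarith : -z i ≤ (0:ℝ)), max_eq_left hz]; ring
  -- cost of an arbitrary point
  have hcost : ∀ a : EuclideanSpace ℝ (Fin p) × EuclideanSpace ℝ (Fin q),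
      ‖(-z) - a.1‖ ^ 2 + ‖(-w) - a.2‖ ^ 2
        = (∑ i, (z i + a.1 i)^2) + ‖w + a.2‖^2 := by
    intro a
    have h1 : ‖(-z) - a.1‖ ^ 2 = ∑ i, (z i + a.1 i)^2 := by
      rw [normsq_eq_sum]
      refine Finset.sum_congr rfl (fun i _ => ?_)
      have hc : ((-z) - a.1) i = -z i - a.1 i := by simp
      rw [hc]; ring
    have h2 : ‖(-w) - a.2‖ = ‖w + a.2‖ := by
      rw [show (-w) - a.2 = -(w + a.2) by abel, norm_neg]
    rw [h1, h2]
  -- termwise lower bound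
  have hterm : ∀ (b1 : EuclideanSpace ℝ (Fin p)), (∀ i, 0 ≤ b1 i) → ∀ i : Fin p,
      (max (z i) 0)^2 + 2*‖w‖*(b1 i) ≤ (z i + b1 i)^2 := by
    intro b1 hb1 i
    have hw := h i
    have hb := hb1 i
    rcases le_total (z i) 0 with hz | hz
    · rw [max_eq_right hz] at hw ⊢
      have hw0 : ‖w‖ = 0 := le_antisymm hw (norm_nonneg w)
      nlinarith [sq_nonneg (z i + b1 i)]
    · rw [max_eq_left hz] at hw ⊢
      nlinarith [sq_nonneg (b1 i)]
  -- norm part lower bound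
  have hwpart : ∀ (v : EuclideanSpace ℝ (Fin q)),
      ‖w‖^2 - 2*‖w‖*‖v‖ + ‖v‖^2 ≤ ‖w + v‖^2 := by
    intro v
    have h1 : |‖w‖ - ‖v‖| ≤ ‖w + v‖ := by
      have := abs_norm_sub_norm_le w (-v)
      simpa [sub_neg_eq_add] using this
    calc ‖w‖^2 - 2*‖w‖*‖v‖ + ‖v‖^2 = |‖w‖ - ‖v‖|^2 := by rw [sq_abs]; ring
      _ ≤ ‖w + v‖^2 := by apply pow_le_pow_left₀ (abs_nonneg _) h1
  have hmulsum : ∀ (b1 : EuclideanSpace ℝ (Fin p)),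
      ∑ i, 2*‖w‖*(b1 i) = 2*‖w‖ * ∑ i, b1 i := by
    intro b1; rw [Finset.mul_sum]
  -- main inequality
  have hmain : ∀ a : EuclideanSpace ℝ (Fin p) × EuclideanSpace ℝ (Fin q),
      ‖a.2‖ ≤ ∑ i, a.1 i → (∀ i, 0 ≤ a.1 i) →
      (∑ i, (max (z i) 0)^2) + ‖w‖^2 ≤ (∑ i, (z i + a.1 i)^2) + ‖w + a.2‖^2 := by
    intro a ha1 ha2
    have key1 : ∑ i, ((max (z i) 0)^2 + 2*‖w‖*(a.1 i)) ≤ ∑ i, (z i + a.1 i)^2 :=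
      Finset.sum_le_sum (fun i _ => hterm a.1 ha2 i)
    rw [Finset.sum_add_distrib, hmulsum] at key1
    have key2 := hwpart a.2
    have key3 : ‖w‖ * ‖a.2‖ ≤ ‖w‖ * ∑ i, a.1 i :=
      mul_le_mul_of_nonneg_left ha1 (norm_nonneg w)
    nlinarith [sq_nonneg ‖a.2‖]
  have hPmem : (P, (0 : EuclideanSpace ℝ (Fin q))) ∈
      {yv : EuclideanSpace ℝ (Fin p) × EuclideanSpace ℝ (Fin q) |
        ‖yv.2‖ ≤ ∑ i : Fin p, yv.1 i ∧ ∀ i : Fin p, 0 ≤ yv.1 i} := by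
    constructor
    · simp only [norm_zero]
      exact Finset.sum_nonneg (fun i _ => by rw [hPapp]; exact le_max_right _ _)
    · intro i; show (0:ℝ) ≤ P i; rw [hPapp]; exact le_max_right _ _
  refine ⟨⟨hPmem, ?_⟩, ?_⟩
  · intro a ha
    obtain ⟨ha1, ha2⟩ := ha
    rw [hcostP, hcost a]
    exact hmain a ha1 ha2
  · -- uniqueness
    intro b hb hbmin
    obtain ⟨hb1, hb2⟩ := hb
    have hle1 := hbmin (P, (0 : EuclideanSpace ℝ (Fin q))) hPmem
    rw [hcostP] at hle1
    rw [hcost b] at hle1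
    have hle2 := hmain b hb1 hb2
    have hE : (∑ i, (z i + b.1 i)^2) + ‖w + b.2‖^2
        = (∑ i, (max (z i) 0)^2) + ‖w‖^2 := le_antisymm hle1 hle2
    -- components equal
    have key1 : ∑ i, ((max (z i) 0)^2 + 2*‖w‖*(b.1 i)) ≤ ∑ i, (z i + b.1 i)^2 :=
      Finset.sum_le_sum (fun i _ => hterm b.1 hb2 i)
    rw [Finset.sum_add_distrib, hmulsum] at key1
    have key2 := hwpart b.2
    have key3 : ‖w‖ * ‖b.2‖ ≤ ‖w‖ * ∑ i, b.1 i :=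
      mul_le_mul_of_nonneg_left hb1 (norm_nonneg w)
    -- b.2 = 0
    have hb2z : b.2 = 0 := by
      have : ‖b.2‖^2 ≤ 0 := by nlinarith
      have h0 : ‖b.2‖ = 0 := by nlinarith [norm_nonneg b.2, sq_nonneg ‖b.2‖]
      exact norm_eq_zero.mp h0
    -- b.1 = P
    have hw2 : ‖w + b.2‖^2 = ‖w‖^2 := by rw [hb2z, add_zero]
    have hsum0 : ∑ i, ((z i + b.1 i)^2 - ((max (z i) 0)^2 + 2*‖w‖*(b.1 i))) = 0 := by
      rw [Finset.sum_sub_distrib, Finset.sum_add_distrib, hmulsum]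
      have hb20 : ‖b.2‖ = 0 := by rw [hb2z, norm_zero]
      rw [hb20] at key3
      nlinarith
    have hterm0 : ∀ i ∈ Finset.univ, (z i + b.1 i)^2 - ((max (z i) 0)^2 + 2*‖w‖*(b.1 i)) = 0 := by
      rw [← Finset.sum_eq_zero_iff_of_nonneg (fun i _ => by
        have := hterm b.1 hb2 i; linarith)]
      exact hsum0
    have hb1P : b.1 = P := by
      ext i
      have ht := hterm0 i (Finset.mem_univ i)
      have hw := h i
      have hbnn := hb2 i
      rw [hPapp]
      rcases le_total (z i) 0 with hz | hz
      · rw [max_eq_right hz] at hw ht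
        have hw0 : ‖w‖ = 0 := le_antisymm hw (norm_nonneg w)
        rw [max_eq_left (by linarith : (0:ℝ) ≤ -z i)]
        rw [hw0] at ht
        have : (z i + b.1 i)^2 = 0 := by linarith
        have := sq_eq_zero_iff.mp this
        linarith
      · rw [max_eq_left hz] at hw ht
        rw [max_eq_right (by linarith : -z i ≤ (0:ℝ))]
        have hsq : (b.1 i)^2 = 0 := by
          refine le_antisymm ?_ (sq_nonneg _)
          nlinarith
        have := sq_eq_zero_iff.mp hsq
        linarith
    rw [Prod.ext_iff]
    exact ⟨hb1P, hb2z⟩
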